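/- Fix a prime p. For h ≥ 2, let R^h be the graded polynomial algebra with j generators in degree p^{h+j} for j = 1, ..., h−1 (hence binomial(h,2) generators total). Then log( max over h of dim R^h_{≤n} ) = (2/(75 (log p)^2)) (log n)^3 + O(log log n · (log n)^2). -/

import Mathlib

open Finset

/-- The number of monomials of total degree at most `n` in the graded polynomial algebra
`R^h` with exactly `j` generators in degree `p^{h+j}` for `j = 1, …, h-1`: generators are
indexed by pairs `(j, t)` with `1 ≤ j ≤ h - 1` and `t < j`, the generator `(j, t)`
having degree `p^{h+j}`. -/
noncomputable def polyCountBeta (p h n : ℕ) : ℕ :=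
  Nat.card {a : ℕ × ℕ →₀ ℕ //
    (∀ q ∈ a.support, 1 ≤ q.1 ∧ q.1 ≤ h - 1 ∧ q.2 < q.1) ∧
    (a.sum fun q m => m * p ^ (h + q.1)) ≤ n}

abbrev PCset (p h n : ℕ) := {a : ℕ × ℕ →₀ ℕ //
    (∀ q ∈ a.support, 1 ≤ q.1 ∧ q.1 ≤ h - 1 ∧ q.2 < q.1) ∧
    (a.sum fun q m => m * p ^ (h + q.1)) ≤ n}

def genIdx (h : ℕ) : Finset (ℕ × ℕ) :=
  (Finset.Icc 1 (h-1) ×ˢ Finset.range h).filter fun q => q.2 < q.1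

lemma mem_genIdx {h : ℕ} {q : ℕ × ℕ} :
    q ∈ genIdx h ↔ 1 ≤ q.1 ∧ q.1 ≤ h - 1 ∧ q.2 < q.1 := by
  simp only [genIdx, Finset.mem_filter, Finset.mem_product, Finset.mem_Icc, Finset.mem_range]
  omega

lemma value_le {p h n : ℕ} (hp : 0 < p) (a : PCset p h n) (q : ℕ × ℕ) :
    a.1 q ≤ n / p ^ (h + q.1) := by
  rw [Nat.le_div_iff_mul_le (Nat.pow_pos hp)]
  rcases eq_or_ne (a.1 q) 0 with h0 | h0
  · simp [h0]
  · have hq : q ∈ a.1.support := Finsupp.mem_support_iff.2 h0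
    have h1 : a.1 q * p ^ (h + q.1) ≤ a.1.sum fun q m => m * p ^ (h + q.1) :=
      Finset.single_le_sum (f := fun q => a.1 q * p ^ (h + q.1)) (fun i _ => Nat.zero_le _) hq
    exact h1.trans a.2.2

lemma pc_inj (p h n : ℕ) (hp : 0 < p) :
    Function.Injective (fun (a : PCset p h n) (q : ↥(genIdx h)) =>
      (⟨a.1 (q : ℕ × ℕ), Nat.lt_succ_of_le (value_le hp a (q : ℕ × ℕ))⟩ :
        Fin (n / p ^ (h + (q : ℕ × ℕ).1) + 1))) := by
  intro a b hab
  apply Subtype.ext; apply Finsupp.ext; intro q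
  by_cases hq : q ∈ genIdx h
  · exact congrArg Fin.val (congrFun hab ⟨q, hq⟩)
  · have ha : a.1 q = 0 := by
      by_contra h0
      exact hq (mem_genIdx.2 (a.2.1 q (Finsupp.mem_support_iff.2 h0)))
    have hb : b.1 q = 0 := by
      by_contra h0
      exact hq (mem_genIdx.2 (b.2.1 q (Finsupp.mem_support_iff.2 h0)))
    rw [ha, hb]

instance pc_finite (p h n : ℕ) [Fact (0 < p)] : Finite (PCset p h n) :=
  Finite.of_injective _ (pc_inj p h n (Fact.out))

lemma pc_card_le (p h n : ℕ) (hp : 0 < p) :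
    polyCountBeta p h n ≤ ∏ q ∈ genIdx h, (n / p ^ (h + q.1) + 1) := by
  haveI := Fact.mk hp
  calc polyCountBeta p h n
      ≤ Nat.card (∀ q : ↥(genIdx h), Fin (n / p ^ (h + (q : ℕ × ℕ).1) + 1)) :=
        Nat.card_le_card_of_injective _ (pc_inj p h n hp)
    _ = ∏ q ∈ genIdx h, (n / p ^ (h + q.1) + 1) := by
        rw [Nat.card_eq_fintype_card, Fintype.card_pi]
        rw [← Finset.prod_coe_sort (genIdx h) (fun q => n / p ^ (h + q.1) + 1)]
        simp

lemma pc_one_le (p h n : ℕ) (hp : 0 < p) : 1 ≤ polyCountBeta p h n := by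
  haveI := Fact.mk hp
  haveI : Nonempty (PCset p h n) := ⟨⟨0, by simp, by simp⟩⟩
  exact Nat.card_pos

lemma card_genIdx_le (h : ℕ) : (genIdx h).card ≤ h * h := by
  calc (genIdx h).card ≤ ((Finset.Icc 1 (h-1)) ×ˢ (Finset.range h)).card :=
        Finset.card_le_card (Finset.filter_subset _ _)
    _ = (Finset.Icc 1 (h-1)).card * h := by rw [Finset.card_product, Finset.card_range]
    _ ≤ h * h := by
        apply Nat.mul_le_mul_right
        rw [Nat.card_Icc]
        omega

lemma lower_map_mem (p h n : ℕ) (hp : 0 < p) (hh : 0 < h)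
    (f : ∀ q : ↥(genIdx h), Fin (n / (h ^ 2 * p ^ (h + (q : ℕ × ℕ).1)) + 1)) :
    let a : ℕ × ℕ →₀ ℕ := Finsupp.onFinset (genIdx h)
      (fun q => if hq : q ∈ genIdx h then (f ⟨q, hq⟩ : ℕ) else 0)
      (fun q hne => by by_contra hq; simp [hq] at hne)
    (∀ q ∈ a.support, 1 ≤ q.1 ∧ q.1 ≤ h - 1 ∧ q.2 < q.1) ∧
      (a.sum fun q m => m * p ^ (h + q.1)) ≤ n := by
  intro a
  have hsupp : a.support ⊆ genIdx h := Finsupp.support_onFinset_subset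
  constructor
  · intro q hq; exact mem_genIdx.1 (hsupp hq)
  · have hsum : (a.sum fun q m => m * p ^ (h + q.1)) =
        ∑ q ∈ genIdx h, a q * p ^ (h + q.1) :=
      Finsupp.sum_of_support_subset a hsupp _ (by intro i _; simp)
    rw [hsum]
    have hterm : ∀ q ∈ genIdx h, a q * p ^ (h + q.1) ≤ n / h ^ 2 := by
      intro q hq
      have hv : a q ≤ n / (h ^ 2 * p ^ (h + q.1)) := by
        have : a q = (f ⟨q, hq⟩ : ℕ) := by simp [a, Finsupp.onFinset_apply, dif_pos hq]
        rw [this]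
        exact Nat.lt_succ_iff.1 (f ⟨q, hq⟩).2
      rw [Nat.le_div_iff_mul_le (by positivity)]
      have := (Nat.le_div_iff_mul_le (by positivity : 0 < h ^ 2 * p ^ (h + q.1))).1 hv
      calc a q * p ^ (h + q.1) * h ^ 2 = a q * (h ^ 2 * p ^ (h + q.1)) := by ring
        _ ≤ n := this
    calc ∑ q ∈ genIdx h, a q * p ^ (h + q.1) ≤ ∑ _q ∈ genIdx h, n / h ^ 2 :=
          Finset.sum_le_sum hterm
      _ = (genIdx h).card * (n / h ^ 2) := by rw [Finset.sum_const, smul_eq_mul]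
      _ ≤ (h * h) * (n / h ^ 2) := Nat.mul_le_mul_right _ (card_genIdx_le h)
      _ ≤ n := by
          rw [← pow_two]
          exact (Nat.mul_div_le n (h ^ 2)).trans_eq' (by ring_nf)

lemma pc_card_ge (p h n : ℕ) (hp : 0 < p) (hh : 0 < h) :
    ∏ q ∈ genIdx h, (n / (h ^ 2 * p ^ (h + q.1)) + 1) ≤ polyCountBeta p h n := by
  haveI := Fact.mk hp
  have hinj : Function.Injective
      (fun (f : ∀ q : ↥(genIdx h), Fin (n / (h ^ 2 * p ^ (h + (q : ℕ × ℕ).1)) + 1)) =>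
        (⟨Finsupp.onFinset (genIdx h)
          (fun q => if hq : q ∈ genIdx h then (f ⟨q, hq⟩ : ℕ) else 0)
          (fun q hne => by by_contra hq; simp [hq] at hne),
          lower_map_mem p h n hp hh f⟩ : PCset p h n)) := by
    intro f g hfg
    funext q
    have := congrArg (fun (a : PCset p h n) => a.1 (q : ℕ × ℕ)) hfg
    simp only [Finsupp.onFinset_apply, dif_pos q.2] at this
    exact Fin.ext this
  calc ∏ q ∈ genIdx h, (n / (h ^ 2 * p ^ (h + q.1)) + 1)
      = Nat.card (∀ q : ↥(genIdx h), Fin (n / (h ^ 2 * p ^ (h + (q : ℕ × ℕ).1)) + 1)) := by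
        rw [Nat.card_eq_fintype_card, Fintype.card_pi]
        rw [← Finset.prod_coe_sort (genIdx h) (fun q => n / (h ^ 2 * p ^ (h + q.1)) + 1)]
        simp
    _ ≤ polyCountBeta p h n := Nat.card_le_card_of_injective _ hinj

lemma sum_genIdx (h : ℕ) (f : ℕ → ℝ) :
    ∑ q ∈ genIdx h, f q.1 = ∑ j ∈ Finset.Icc 1 (h-1), (j : ℝ) * f j := by
  rw [genIdx, Finset.sum_filter, Finset.sum_product]
  apply Finset.sum_congr rfl
  intro j hj
  rw [Finset.mem_Icc] at hj
  have : ∑ t ∈ Finset.range h, (if t < j then f j else 0)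
      = ∑ t ∈ (Finset.range h).filter (fun t => t < j), f j := by
    rw [Finset.sum_filter]
  rw [this, Finset.sum_const]
  have hfil : (Finset.range h).filter (fun t => t < j) = Finset.range j := by
    ext t; simp only [Finset.mem_filter, Finset.mem_range]; omega
  rw [hfil, Finset.card_range, nsmul_eq_mul]

lemma sum_jAB (A B : ℝ) (m : ℕ) :
    ∑ j ∈ Finset.Icc 1 m, (j : ℝ) * (A - B * j)
      = A * (m * (m + 1)) / 2 - B * (m * (m + 1) * (2 * m + 1)) / 6 := by
  induction m with
  | zero => simp
  | succ m ih =>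
    rw [Finset.sum_Icc_succ_top (by omega), ih]
    push_cast
    ring

lemma core_upper (k m l : ℝ) (hk : 0 ≤ k) (hkm : k ≤ m) (hkl : k ≤ l - m) :
    m * k ^ 2 / 2 - k ^ 3 / 3 ≤ 2 * l ^ 3 / 75 := by
  nlinarith [mul_nonneg (sq_nonneg (3 * k - 2 * m)) (by linarith : (0:ℝ) ≤ 7 * k + (m - k)),
    mul_nonneg (mul_nonneg (by linarith : (0:ℝ) ≤ l - m - k) (by linarith : (0:ℝ) ≤ l - m - k)) (by linarith : (0:ℝ) ≤ l - m - k),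
    mul_nonneg (mul_nonneg (by linarith : (0:ℝ) ≤ l - m - k) (by linarith : (0:ℝ) ≤ k + m)) (by linarith : (0:ℝ) ≤ k + m),
    mul_nonneg (mul_nonneg (by linarith : (0:ℝ) ≤ l - m - k) (by linarith : (0:ℝ) ≤ l - m - k)) (by linarith : (0:ℝ) ≤ k + m)]

lemma up2 (κ μ l : ℝ) (h0 : 0 ≤ κ) (h1 : κ + 1 ≤ μ) (h2 : μ ≤ l - κ) :
    μ * (κ * (κ + 1)) / 2 - κ * (κ + 1) * (2 * κ + 1) / 6
      ≤ 2 * l ^ 3 / 75 + (l + 1) * l / 2 := by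
  have hc := core_upper κ (μ - 1) l (by linarith) (by linarith) (by linarith)
  nlinarith [mul_nonneg h0 (by linarith : (0:ℝ) ≤ μ)]

lemma core_lower (x l : ℝ) (hl : 10 ≤ l) (hx1 : 2 * l / 5 - 1 ≤ x) (hx2 : x ≤ 2 * l / 5) :
    2 * l ^ 3 / 75 - 3 * l ^ 2
      ≤ (l - x) * ((x - 1) * x) / 2 - (x - 1) * x * (2 * x - 1) / 6 := by
  nlinarith [sq_nonneg (2 * l / 5 - x), mul_nonneg (by linarith : (0:ℝ) ≤ 2 * l / 5 - x) (by linarith : (0:ℝ) ≤ x),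
    mul_nonneg (mul_nonneg (by linarith : (0:ℝ) ≤ 2 * l / 5 - x) (by linarith : (0:ℝ) ≤ 2 * l / 5 - x)) (by linarith : (0:ℝ) ≤ l),
    sq_nonneg x, sq_nonneg l]

lemma log_count_upper (p h n : ℕ) (hp : 2 ≤ p) (hh : 2 ≤ h) (hn : 1 ≤ n) :
    Real.log (polyCountBeta p h n) ≤
      Real.log p * (2 * (Real.log n / Real.log p) ^ 3 / 75
        + (Real.log n / Real.log p + 1) * (Real.log n / Real.log p) / 2) := by
  set lp := Real.log p with hlp
  set L := Real.log n / lp with hL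
  have hlp0 : 0 < lp := Real.log_pos (by exact_mod_cast hp)
  have hln0 : 0 ≤ Real.log n := Real.log_natCast_nonneg n
  have hL0 : 0 ≤ L := div_nonneg hln0 hlp0.le
  have hlogn : Real.log n = L * lp := by rw [hL, div_mul_cancel₀ _ hlp0.ne']
  -- step 1 : log count ≤ sum of logs
  have step1 : Real.log (polyCountBeta p h n) ≤
      ∑ j ∈ Finset.Icc 1 (h-1), (j : ℝ) * Real.log ((n / p ^ (h + j) + 1 : ℕ) : ℝ) := by
    rw [← sum_genIdx]
    have h1 : Real.log (polyCountBeta p h n) ≤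
        Real.log ((∏ q ∈ genIdx h, (n / p ^ (h + q.1) + 1) : ℕ) : ℝ) := by
      apply Real.log_le_log
      · exact_mod_cast pc_one_le p h n (by omega)
      · exact_mod_cast pc_card_le p h n (by omega)
    refine h1.trans_eq ?_
    push_cast
    exact Real.log_prod (fun q _ => by positivity)
  -- define K
  set K : ℕ := min (h - 1) (Nat.floor L - h) with hK
  -- step 2 : termwise bound
  have step2 : ∀ j ∈ Finset.Icc 1 (h-1),
      (j : ℝ) * Real.log ((n / p ^ (h + j) + 1 : ℕ) : ℝ) ≤
        if j ≤ K then (j : ℝ) * (lp * (L + 1 - h) - lp * j) else 0 := by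
    intro j hj
    rw [Finset.mem_Icc] at hj
    by_cases hd : p ^ (h + j) ≤ n
    · -- p^(h+j) ≤ n
      have hcast : ((p : ℝ)) ^ (h + j) ≤ (n : ℝ) := by exact_mod_cast hd
      have hp1 : (1 : ℝ) < p := by exact_mod_cast hp
      have hple : (h + j : ℝ) * lp ≤ Real.log n := by
        calc (h + j : ℝ) * lp = Real.log ((p : ℝ) ^ (h + j)) := by
              rw [Real.log_pow]; push_cast; ring
          _ ≤ Real.log n := Real.log_le_log (by positivity) hcast
      have hjL : (h + j : ℝ) ≤ L := by
        rw [hL, le_div_iff₀ hlp0]; linarith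
      have hjK : j ≤ K := by
        have : (h + j : ℕ) ≤ Nat.floor L := Nat.le_floor (by push_cast; linarith)
        omega
      rw [if_pos hjK]
      apply mul_le_mul_of_nonneg_left _ (by positivity)
      -- log(n/p^d + 1) ≤ lp * (L + 1 - h - j)
      have hq1 : 1 ≤ n / p ^ (h + j) := (Nat.one_le_div_iff (by positivity)).2 hd
      have h2q : ((n / p ^ (h + j) + 1 : ℕ) : ℝ) ≤ 2 * ((n : ℝ) / (p : ℝ) ^ (h + j)) := by
        have : (n / p ^ (h + j) + 1 : ℕ) ≤ 2 * (n / p ^ (h + j)) := by omega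
        calc ((n / p ^ (h + j) + 1 : ℕ) : ℝ) ≤ ((2 * (n / p ^ (h + j)) : ℕ) : ℝ) := by
              exact_mod_cast this
          _ ≤ 2 * ((n : ℝ) / (p : ℝ) ^ (h + j)) := by
              push_cast
              have := Nat.cast_div_le (α := ℝ) (m := n) (n := p ^ (h + j))
              push_cast at this
              nlinarith
      calc Real.log ((n / p ^ (h + j) + 1 : ℕ) : ℝ)
          ≤ Real.log (2 * ((n : ℝ) / (p : ℝ) ^ (h + j))) := by
            apply Real.log_le_log (by positivity) h2q
        _ = Real.log 2 + Real.log n - (h + j : ℝ) * lp := by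
            rw [Real.log_mul (by norm_num) (by positivity),
              Real.log_div (by positivity) (by positivity), Real.log_pow]
            push_cast; ring
        _ ≤ lp + Real.log n - (h + j : ℝ) * lp := by
            have : Real.log 2 ≤ lp := Real.log_le_log (by norm_num) (by exact_mod_cast hp)
            linarith
        _ ≤ lp * (L + 1 - h) - lp * j := by
            rw [hlogn]; push_cast; ring_nf; nlinarith [hlp0]
    · -- p^(h+j) > n : quotient is 0
      have : n / p ^ (h + j) = 0 := Nat.div_eq_of_lt (by omega)
      rw [this]
      norm_num
      by_cases hjK : j ≤ K
      · rw [if_pos hjK]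
        have hfl : h + j ≤ Nat.floor L := by omega
        have : (h + j : ℝ) ≤ L := by
          calc (h + j : ℝ) = ((h + j : ℕ) : ℝ) := by push_cast; ring
            _ ≤ (Nat.floor L : ℝ) := by exact_mod_cast hfl
            _ ≤ L := Nat.floor_le hL0
        have hj0 : (0:ℝ) ≤ (j:ℝ) := by positivity
        nlinarith [mul_nonneg (mul_nonneg hlp0.le hj0)
          (by push_cast at this ⊢; linarith : (0:ℝ) ≤ L + 1 - (h:ℝ) - (j:ℝ))]
      · rw [if_neg hjK]
  -- step 3: sum the ite bound
  have hKh : K ≤ h - 1 := Nat.min_le_left _ _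
  have step3 : ∑ j ∈ Finset.Icc 1 (h-1),
      (if j ≤ K then (j : ℝ) * (lp * (L + 1 - h) - lp * j) else 0)
      = ∑ j ∈ Finset.Icc 1 K, (j : ℝ) * (lp * (L + 1 - h) - lp * j) := by
    rw [← Finset.sum_filter]
    congr 1
    ext j
    simp only [Finset.mem_filter, Finset.mem_Icc]
    omega
  have hsum := sum_jAB (lp * (L + 1 - h)) lp K
  have step4 : ∑ j ∈ Finset.Icc 1 K, (j : ℝ) * (lp * (L + 1 - h) - lp * j)
      ≤ lp * (2 * L ^ 3 / 75 + (L + 1) * L / 2) := by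
    rw [hsum]
    rcases Nat.eq_zero_or_pos K with h0 | h0
    · rw [h0]
      push_cast
      ring_nf
      positivity
    · have hup : (K : ℝ) + 1 ≤ L + 1 - h := by
        have h1 : K + h ≤ Nat.floor L := by omega
        have h2 : ((K + h : ℕ) : ℝ) ≤ L := (Nat.le_floor_iff hL0).1 (by omega)
        push_cast at h2
        linarith
      have hdown : L + 1 - h ≤ L - K := by
        have : K + 1 ≤ h := by omega
        have : ((K : ℕ) : ℝ) + 1 ≤ (h : ℝ) := by exact_mod_cast this
        linarith
      have := up2 (K : ℝ) (L + 1 - h) L (by positivity) hup hdown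
      have hgoal : lp * (L + 1 - h) * ((K : ℝ) * (K + 1)) / 2
          - lp * ((K : ℝ) * (K + 1) * (2 * K + 1)) / 6
          = lp * ((L + 1 - h) * ((K : ℝ) * ((K : ℝ) + 1)) / 2
            - (K : ℝ) * ((K : ℝ) + 1) * (2 * (K : ℝ) + 1) / 6) := by ring
      rw [hgoal]
      exact mul_le_mul_of_nonneg_left this hlp0.le
  calc Real.log (polyCountBeta p h n)
      ≤ ∑ j ∈ Finset.Icc 1 (h-1), (j : ℝ) * Real.log ((n / p ^ (h + j) + 1 : ℕ) : ℝ) := step1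
    _ ≤ ∑ j ∈ Finset.Icc 1 (h-1),
        (if j ≤ K then (j : ℝ) * (lp * (L + 1 - h) - lp * j) else 0) :=
        Finset.sum_le_sum step2
    _ = ∑ j ∈ Finset.Icc 1 K, (j : ℝ) * (lp * (L + 1 - h) - lp * j) := step3
    _ ≤ lp * (2 * L ^ 3 / 75 + (L + 1) * L / 2) := step4

lemma log_count_lower (p n : ℕ) (hp : 2 ≤ p) (hn : 1 ≤ n)
    (hL : 10 ≤ Real.log n / Real.log p) :
    2 ≤ Nat.floor (2 * (Real.log n / Real.log p) / 5) ∧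
    Real.log p * (2 * (Real.log n / Real.log p) ^ 3 / 75 - 3 * (Real.log n / Real.log p) ^ 2)
      - Real.log (Real.log n / Real.log p) * (Real.log n / Real.log p) ^ 2
      ≤ Real.log (polyCountBeta p (Nat.floor (2 * (Real.log n / Real.log p) / 5)) n) := by
  set lp := Real.log p with hlp
  set L := Real.log n / lp with hLdef
  have hlp0 : 0 < lp := Real.log_pos (by exact_mod_cast hp)
  have hlogn : Real.log n = L * lp := by rw [hLdef, div_mul_cancel₀ _ hlp0.ne']
  set h : ℕ := Nat.floor (2 * L / 5) with hh
  have hh4 : 4 ≤ h := Nat.le_floor (by push_cast; linarith)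
  have hx2 : (h : ℝ) ≤ 2 * L / 5 := Nat.floor_le (by linarith)
  have hx1 : 2 * L / 5 - 1 ≤ (h : ℝ) := by
    have := Nat.lt_floor_add_one (2 * L / 5)
    linarith
  have hhL : (h : ℝ) ≤ L := by linarith
  refine ⟨by omega, ?_⟩
  -- step 1 : log count ≥ sum of logs
  have step1 : ∑ j ∈ Finset.Icc 1 (h-1),
      (j : ℝ) * Real.log ((n / (h ^ 2 * p ^ (h + j)) + 1 : ℕ) : ℝ)
      ≤ Real.log (polyCountBeta p h n) := by
    rw [← sum_genIdx h (fun j => Real.log ((n / (h ^ 2 * p ^ (h + j)) + 1 : ℕ) : ℝ))]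
    have h1 : Real.log ((∏ q ∈ genIdx h, (n / (h ^ 2 * p ^ (h + q.1)) + 1) : ℕ) : ℝ)
        ≤ Real.log (polyCountBeta p h n) := by
      apply Real.log_le_log
      · have : 0 < ∏ q ∈ genIdx h, (n / (h ^ 2 * p ^ (h + q.1)) + 1) :=
          Finset.prod_pos (fun q _ => Nat.succ_pos _)
        exact_mod_cast this
      · exact_mod_cast pc_card_ge p h n (by omega) (by omega)
    refine le_trans (le_of_eq ?_) h1
    push_cast
    exact (Real.log_prod (fun q _ => by positivity)).symm
  -- step 2 : termwise lower bound
  have step2 : ∀ j ∈ Finset.Icc 1 (h-1),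
      (j : ℝ) * ((Real.log n - 2 * Real.log h - h * lp) - lp * j)
        ≤ (j : ℝ) * Real.log ((n / (h ^ 2 * p ^ (h + j)) + 1 : ℕ) : ℝ) := by
    intro j hj
    apply mul_le_mul_of_nonneg_left _ (by positivity)
    set m : ℕ := h ^ 2 * p ^ (h + j) with hm
    have hm0 : 0 < m := by positivity
    have hlt : (n : ℝ) / (m : ℝ) < ((n / m + 1 : ℕ) : ℝ) := by
      rw [div_lt_iff₀ (by exact_mod_cast hm0)]
      have : n < (n / m + 1) * m := (Nat.div_lt_iff_lt_mul hm0).1 (Nat.lt_succ_self _)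
      exact_mod_cast this
    have hpos : (0 : ℝ) < (n : ℝ) / (m : ℝ) := by
      apply div_pos (by exact_mod_cast hn) (by exact_mod_cast hm0)
    calc Real.log n - 2 * Real.log h - h * lp - lp * j
        = Real.log ((n : ℝ) / (m : ℝ)) := by
          rw [hm]
          push_cast
          rw [Real.log_div (by positivity) (by positivity),
            Real.log_mul (by positivity) (by positivity), Real.log_pow, Real.log_pow]
          push_cast
          ring
      _ ≤ Real.log ((n / m + 1 : ℕ) : ℝ) := Real.log_le_log hpos hlt.le
  -- step 3 : closed form and core bound
  have hsum := sum_jAB (Real.log n - 2 * Real.log h - h * lp) lp (h - 1)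
  have hcast1 : ((h - 1 : ℕ) : ℝ) = (h : ℝ) - 1 := by
    have : 1 ≤ h := by omega
    push_cast [this]
    ring
  have hcore := core_lower (h : ℝ) L hL hx1 hx2
  have hlogh : 0 ≤ Real.log h := Real.log_natCast_nonneg h
  have hloghL : Real.log h ≤ Real.log L := by
    apply Real.log_le_log (by positivity) hhL
  have hL0 : (0 : ℝ) < L := by linarith
  have hlogL0 : 0 ≤ Real.log L := by
    have : (1:ℝ) ≤ L := by linarith
    exact Real.log_nonneg this
  have step3 : lp * (2 * L ^ 3 / 75 - 3 * L ^ 2) - Real.log L * L ^ 2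
      ≤ (Real.log n - 2 * Real.log h - h * lp) * (((h-1:ℕ) : ℝ) * ((h-1:ℕ) + 1)) / 2
        - lp * (((h-1:ℕ):ℝ) * (((h-1:ℕ):ℝ) + 1) * (2 * ((h-1:ℕ):ℝ) + 1)) / 6 := by
    rw [hcast1]
    set x : ℝ := (h : ℝ) with hx
    have hexp : (Real.log n - 2 * Real.log h - x * lp) * ((x - 1) * ((x-1) + 1)) / 2
        - lp * ((x-1) * ((x-1) + 1) * (2 * (x-1) + 1)) / 6
        = lp * ((L - x) * ((x - 1) * x) / 2 - (x - 1) * x * (2 * x - 1) / 6)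
          - Real.log h * ((x - 1) * x) := by
      rw [hlogn]; ring
    rw [hexp]
    have hb1 : lp * (2 * L ^ 3 / 75 - 3 * L ^ 2)
        ≤ lp * ((L - x) * ((x - 1) * x) / 2 - (x - 1) * x * (2 * x - 1) / 6) :=
      mul_le_mul_of_nonneg_left hcore hlp0.le
    have hb2 : Real.log h * ((x - 1) * x) ≤ Real.log L * L ^ 2 := by
      have hx1' : (1:ℝ) ≤ x := by rw [hx]; exact_mod_cast (by omega : 1 ≤ h)
      have hxx : (x - 1) * x ≤ L ^ 2 := by nlinarith
      have h1 : Real.log h * ((x-1)*x) ≤ Real.log L * ((x-1)*x) := by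
        apply mul_le_mul_of_nonneg_right hloghL (by nlinarith)
      have h2 : Real.log L * ((x-1)*x) ≤ Real.log L * L ^ 2 :=
        mul_le_mul_of_nonneg_left hxx hlogL0
      linarith
    linarith
  calc lp * (2 * L ^ 3 / 75 - 3 * L ^ 2) - Real.log L * L ^ 2
      ≤ _ := step3
    _ = ∑ j ∈ Finset.Icc 1 (h-1),
        (j : ℝ) * ((Real.log n - 2 * Real.log h - h * lp) - lp * j) := hsum.symm
    _ ≤ ∑ j ∈ Finset.Icc 1 (h-1),
        (j : ℝ) * Real.log ((n / (h ^ 2 * p ^ (h + j)) + 1 : ℕ) : ℝ) :=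
        Finset.sum_le_sum step2
    _ ≤ Real.log (polyCountBeta p h n) := step1

lemma loglog_ge_one {x : ℝ} (hx : 6 ≤ x) : 1 ≤ Real.log x := by
  have he : Real.exp 1 < 2.7182818286 := Real.exp_one_lt_d9
  calc (1:ℝ) = Real.log (Real.exp 1) := (Real.log_exp 1).symm
    _ ≤ Real.log x := Real.log_le_log (Real.exp_pos 1) (by linarith)

lemma half_le_log {x : ℝ} (hx : 2 ≤ x) : 1/2 ≤ Real.log x := by
  have h1 : Real.log x⁻¹ ≤ x⁻¹ - 1 := Real.log_le_sub_one_of_pos (by positivity)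
  rw [Real.log_inv] at h1
  have : x⁻¹ ≤ 1/2 := by
    rw [inv_le_comm₀ (by linarith) (by norm_num)]
    linarith
  linarith

lemma absorb (n : ℕ) (hn : 2 ≤ n) :
    (Real.log n)^2 ≤ 5 * max 1 (Real.log (Real.log n) * (Real.log n)^2) := by
  have hlog2 : Real.log 2 < 0.6931471808 := Real.log_two_lt_d9
  have hlogn0 : 0 ≤ Real.log n := Real.log_natCast_nonneg n
  by_cases h8 : n < 8
  · have hle : Real.log n ≤ Real.log 8 := by
      apply Real.log_le_log (by exact_mod_cast (by omega : 0 < n))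
      exact_mod_cast (by omega : n ≤ 8)
    have h8' : Real.log (8:ℝ) = 3 * Real.log 2 := by
      rw [(by norm_num : (8:ℝ) = 2^3), Real.log_pow]
      push_cast; ring
    have : Real.log n ≤ 2.08 := by rw [h8'] at hle; linarith
    have hmax : (1:ℝ) ≤ max 1 (Real.log (Real.log n) * (Real.log n)^2) := le_max_left _ _
    nlinarith
  · have h2 : (2:ℝ) ≤ Real.log n := by
      have hle : Real.log 8 ≤ Real.log n := by
        apply Real.log_le_log (by norm_num)
        exact_mod_cast (by omega : 8 ≤ n)
      have h8' : Real.log (8:ℝ) = 3 * Real.log 2 := by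
        rw [(by norm_num : (8:ℝ) = 2^3), Real.log_pow]
        push_cast; ring
      have : Real.log 2 > 0.6931471803 := Real.log_two_gt_d9
      rw [h8'] at hle; linarith
    have hll : 1/2 ≤ Real.log (Real.log n) := half_le_log h2
    have : (Real.log n)^2 ≤ 5 * (Real.log (Real.log n) * (Real.log n)^2) := by nlinarith
    calc (Real.log n)^2 ≤ 5 * (Real.log (Real.log n) * (Real.log n)^2) := this
      _ ≤ 5 * max 1 (Real.log (Real.log n) * (Real.log n)^2) := by
          apply mul_le_mul_of_nonneg_left (le_max_right _ _) (by norm_num)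

/-- `log (max over h of dim R^h_{≤n}) = (2/(75 (log p)^2)) (log n)^3
  + O(log log n · (log n)^2)`. -/
theorem stmt8 (p : ℕ) (hp : p.Prime) : ∃ C : ℝ, ∀ n : ℕ, 2 ≤ n →
    (∀ h : ℕ, 2 ≤ h →
      Real.log (polyCountBeta p h n) ≤
        2 / (75 * (Real.log p) ^ 2) * (Real.log n) ^ 3 +
          C * max 1 (Real.log (Real.log n) * (Real.log n) ^ 2)) ∧
    (∃ h : ℕ, 2 ≤ h ∧
      2 / (75 * (Real.log p) ^ 2) * (Real.log n) ^ 3 -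
          C * max 1 (Real.log (Real.log n) * (Real.log n) ^ 2) ≤
        Real.log (polyCountBeta p h n)) := by
  have hp2 : 2 ≤ p := hp.two_le
  set lp := Real.log p with hlp
  have hlp0 : 0 < lp := Real.log_pos (by exact_mod_cast hp2)
  refine ⟨27 * lp + 6 + 8 / lp + (1 + |Real.log lp|) / lp ^ 2, ?_⟩
  set C := 27 * lp + 6 + 8 / lp + (1 + |Real.log lp|) / lp ^ 2 with hC
  have hCpos : 0 < C := by rw [hC]; positivity
  intro n hn
  set L := Real.log n / lp with hLdef
  set E := max 1 (Real.log (Real.log n) * (Real.log n) ^ 2) with hE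
  clear_value lp C L E
  have hE1 : (1:ℝ) ≤ E := by rw [hE]; exact le_max_left _ _
  have hE0 : (0:ℝ) ≤ E := by linarith
  have hEeq : Real.log (Real.log n) * (Real.log n) ^ 2 ≤ E := by
    rw [hE]; exact le_max_right _ _
  have hlogn0 : 0 ≤ Real.log n := Real.log_natCast_nonneg n
  have hL0 : 0 ≤ L := by rw [hLdef]; exact div_nonneg hlogn0 hlp0.le
  have hlogn : Real.log n = L * lp := by rw [hLdef]; field_simp
  have hE5 : (Real.log n)^2 ≤ 5 * E := by
    have := absorb n hn
    calc (Real.log n)^2 ≤ 5 * max 1 (Real.log (Real.log n) * (Real.log n)^2) := this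
      _ = 5 * E := by rw [hE]
  have hln6 : Real.log n ≤ 6 * E := by nlinarith [sq_nonneg (Real.log n - 1)]
  have hmain : 2 / (75 * lp ^ 2) * (Real.log n) ^ 3 = lp * (2 * L ^ 3 / 75) := by
    rw [hlogn]; field_simp
  constructor
  · -- upper bound
    intro h hh
    have hup := log_count_upper p h n hp2 hh (by omega)
    rw [← hlp, ← hLdef] at hup
    have herr : lp * ((L + 1) * L / 2) ≤ C * E := by
      have h1 : lp * Real.log n ≤ 6 * (lp * E) := by
        have hx := mul_le_mul_of_nonneg_left hln6 hlp0.le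
        linarith only [hx]
      have h2 : lp * (lp * ((L + 1) * L / 2)) = ((Real.log n)^2 + lp * Real.log n) / 2 := by
        rw [hlogn]; ring
      have h3 : lp * ((6 + 8/lp) * E) ≤ lp * (C * E) := by
        apply mul_le_mul_of_nonneg_left _ hlp0.le
        apply mul_le_mul_of_nonneg_right _ hE0
        rw [hC]
        have hx : 0 ≤ (1 + |Real.log lp|) / lp ^ 2 := by positivity
        have hy : 0 < 27 * lp := by positivity
        linarith only [hx, hy]
      have h4 : lp * ((6 + 8/lp) * E) = 6 * (lp * E) + 8 * E := by field_simp
      have h5 : lp * (lp * ((L + 1) * L / 2)) ≤ lp * (C * E) := by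
        rw [h2]
        have hlpE : 0 ≤ lp * E := mul_nonneg hlp0.le hE0
        linarith only [h1, h3, h4, hE5, hlpE, hE0]
      exact le_of_mul_le_mul_left h5 hlp0
    calc Real.log (polyCountBeta p h n)
        ≤ lp * (2 * L ^ 3 / 75 + (L + 1) * L / 2) := hup
      _ = lp * (2 * L ^ 3 / 75) + lp * ((L + 1) * L / 2) := by ring
      _ ≤ 2 / (75 * lp ^ 2) * (Real.log n) ^ 3 + C * E := by rw [hmain]; linarith only [herr]
  · -- lower bound
    by_cases hLbig : 10 ≤ L
    · obtain ⟨hh2, hlow⟩ := log_count_lower p n hp2 (by omega)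
        (by rw [← hlp, ← hLdef]; exact hLbig)
      rw [← hlp, ← hLdef] at hh2 hlow
      refine ⟨Nat.floor (2 * L / 5), hh2, ?_⟩
      have hlog2 : Real.log 2 > 0.6931471803 := Real.log_two_gt_d9
      have hlp2 : Real.log 2 ≤ lp := by
        rw [hlp]; exact Real.log_le_log (by norm_num) (by exact_mod_cast hp2)
      have hln6' : 6 ≤ Real.log n := by
        have hx : 10 * lp ≤ L * lp := mul_le_mul_of_nonneg_right hLbig hlp0.le
        linarith only [hx, hlogn, hlp2, hlog2]
      have hll1 : 1 ≤ Real.log (Real.log n) := loglog_ge_one hln6'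
      have hlogL : Real.log L ≤ Real.log (Real.log n) + |Real.log lp| := by
        have hrw : Real.log L = Real.log (Real.log n) - Real.log lp := by
          rw [hLdef, Real.log_div (ne_of_gt (by linarith : (0:ℝ) < Real.log n))
            (ne_of_gt hlp0)]
        rw [hrw]
        linarith only [neg_abs_le (Real.log lp)]
      have hL2 : L ^ 2 * lp ^ 2 = (Real.log n) ^ 2 := by rw [hlogn]; ring
      have hs0 : (0:ℝ) ≤ (Real.log n)^2 := sq_nonneg _
      have hdef : 3 * lp * L ^ 2 + Real.log L * L ^ 2 ≤ C * E := by
        have hlogL0 : 0 ≤ Real.log L := Real.log_nonneg (by linarith only [hLbig])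
        have t1 : 3 * lp * L ^ 2 * lp ^ 2 = 3 * lp * (Real.log n) ^ 2 := by
          rw [← hL2]; ring
        have t2 : 3 * lp * (Real.log n)^2
            ≤ 3 * lp * (Real.log (Real.log n) * (Real.log n)^2) := by
          apply mul_le_mul_of_nonneg_left _ (by positivity : (0:ℝ) ≤ 3 * lp)
          exact le_mul_of_one_le_left hs0 hll1
        have t3 : Real.log L * L ^ 2 * lp ^ 2 ≤
            (1 + |Real.log lp|) * (Real.log (Real.log n) * (Real.log n) ^ 2) := by
          have e1 : Real.log L * L ^ 2 * lp ^ 2 = Real.log L * (Real.log n) ^ 2 := by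
            rw [← hL2]; ring
          rw [e1]
          have e2 : Real.log L * (Real.log n)^2 ≤
              (Real.log (Real.log n) + |Real.log lp|) * (Real.log n)^2 :=
            mul_le_mul_of_nonneg_right hlogL hs0
          have e4 : (Real.log n)^2 ≤ Real.log (Real.log n) * (Real.log n)^2 :=
            le_mul_of_one_le_left hs0 hll1
          have e5 : |Real.log lp| * (Real.log n)^2
              ≤ |Real.log lp| * (Real.log (Real.log n) * (Real.log n)^2) :=
            mul_le_mul_of_nonneg_left e4 (abs_nonneg _)
          linarith only [e2, e5]
        have hCE : (3 * lp * L ^ 2 + Real.log L * L ^ 2) * lp ^ 2 ≤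
            (3 * lp + (1 + |Real.log lp|)) * (Real.log (Real.log n) * (Real.log n) ^ 2) := by
          linarith only [t1, t2, t3]
        have hq : 0 ≤ Real.log (Real.log n) * (Real.log n) ^ 2 :=
          mul_nonneg (by linarith only [hll1]) hs0
        have hC2 : 3 * lp + (1 + |Real.log lp|) ≤ C * lp ^ 2 := by
          have expand : C * lp^2 = 27*lp^3 + 6*lp^2 + 8*lp + (1+|Real.log lp|) := by
            rw [hC]; field_simp
          rw [expand]
          have p1 : 0 < lp^3 := by positivity
          have p2 : 0 < lp^2 := by positivity
          linarith only [p1, p2, hlp0]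
        have hlp2pos : 0 < lp ^ 2 := by positivity
        have hC' : (3 * lp + (1 + |Real.log lp|)) * (Real.log (Real.log n) * (Real.log n) ^ 2)
            ≤ C * E * lp ^ 2 := by
          calc (3 * lp + (1 + |Real.log lp|)) * (Real.log (Real.log n) * (Real.log n) ^ 2)
              ≤ C * lp ^ 2 * (Real.log (Real.log n) * (Real.log n) ^ 2) :=
                mul_le_mul_of_nonneg_right hC2 hq
            _ ≤ C * lp ^ 2 * E :=
                mul_le_mul_of_nonneg_left hEeq (mul_nonneg hCpos.le hlp2pos.le)
            _ = C * E * lp ^ 2 := by ring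
        exact le_of_mul_le_mul_right (hCE.trans hC') hlp2pos
      calc 2 / (75 * lp ^ 2) * (Real.log n) ^ 3 - C * E
          = lp * (2 * L ^ 3 / 75) - C * E := by rw [hmain]
        _ ≤ lp * (2 * L ^ 3 / 75 - 3 * L ^ 2) - Real.log L * L ^ 2 := by linarith only [hdef]
        _ ≤ Real.log (polyCountBeta p (Nat.floor (2 * L / 5)) n) := hlow
    · -- small L
      refine ⟨2, le_refl 2, ?_⟩
      push_neg at hLbig
      have hcount : 0 ≤ Real.log (polyCountBeta p 2 n) := Real.log_natCast_nonneg _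
      have hmainle : 2 / (75 * lp ^ 2) * (Real.log n) ^ 3 ≤ 27 * lp := by
        rw [hmain]
        have hL3 : L^3 ≤ 1000 := by
          nlinarith [mul_nonneg (by linarith only [hLbig] : (0:ℝ) ≤ 10 - L)
            (by nlinarith [sq_nonneg (L+5)] : (0:ℝ) ≤ 100 + 10*L + L^2)]
        linarith only [mul_le_mul_of_nonneg_left hL3 hlp0.le, hlp0]
      have hCE : 27 * lp ≤ C * E := by
        have h1 : 27 * lp ≤ C := by
          rw [hC]
          have q1 : 0 ≤ (1 + |Real.log lp|) / lp ^ 2 := by positivity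
          have q2 : 0 ≤ 8 / lp := by positivity
          linarith only [q1, q2]
        calc 27 * lp ≤ C := h1
          _ = C * 1 := by ring
          _ ≤ C * E := mul_le_mul_of_nonneg_left hE1 hCpos.le
      linarith only [hcount, hmainle, hCE]
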